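/- Let R ∈ ℝ^m and S ∈ ℝ^n be nonnegative real vectors with equal component sums. There exists a nonnegative real m×n matrix A with row sum vector R and column sum vector S satisfying ρ_π A = A (i.e. a_{i,j} = a_{m+1−i, n+1−j} for all i,j) if and only if R and S are both palindromic. Moreover, if R and S have nonnegative integer components, there exists such a matrix with nonnegative integer entries if and only if R and S are both palindromic. -/

import Mathlib

open Finset
lemma row_aux (ps : ℕ → ℕ) (hps : Monotone ps) :
    ∀ n a b, ps 0 ≤ a → a ≤ b → b ≤ ps n →
    ∑ j ∈ range n, (min b (ps (j+1)) - max a (ps j)) = b - a := by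
  intro n
  induction n with
  | zero => intro a b h0 hab hb; simp; omega
  | succ n ih =>
    intro a b h0 hab hb
    rw [Finset.sum_range_succ]
    by_cases hbn : b ≤ ps n
    · rw [ih a b h0 hab hbn]
      have : min b (ps (n+1)) ≤ max a (ps n) := by
        have := min_le_left b (ps (n+1)); omega
      omega
    · push_neg at hbn
      by_cases han : a ≤ ps n
      · have heq : ∑ j ∈ range n, (min b (ps (j+1)) - max a (ps j))
            = ∑ j ∈ range n, (min (ps n) (ps (j+1)) - max a (ps j)) := by
          apply Finset.sum_congr rfl
          intro j hj
          simp only [mem_range] at hj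
          have h1 : ps (j+1) ≤ ps n := hps hj
          have := min_le_left b (ps (j+1))
          omega
        rw [heq, ih a (ps n) h0 han le_rfl]
        have := hps (Nat.le_succ n)
        omega
      · push_neg at han
        have heq : ∑ j ∈ range n, (min b (ps (j+1)) - max a (ps j)) = 0 := by
          apply Finset.sum_eq_zero
          intro j hj
          simp only [mem_range] at hj
          have h1 : ps (j+1) ≤ ps n := hps hj
          have := min_le_left b (ps (j+1))
          omega
        rw [heq]
        have := hps (Nat.le_succ n)
        omega
lemma pal_prefix (m : ℕ) (r : ℕ → ℕ) (hr : ∀ i < m, r i = r (m-1-i)) :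
    ∀ i ≤ m, (∑ k ∈ range (m-i), r k) + ∑ k ∈ range i, r k = ∑ k ∈ range m, r k := by
  intro i hi
  have hsplit : ∑ k ∈ range m, r k
      = (∑ k ∈ range (m-i), r k) + ∑ k ∈ Ico (m-i) m, r k := by
    rw [Finset.range_eq_Ico, ← Finset.sum_Ico_consecutive _ (Nat.zero_le _) (Nat.sub_le m i), Finset.range_eq_Ico]
  have htail : ∑ k ∈ Ico (m-i) m, r k = ∑ k ∈ range i, r k := by
    rw [Finset.sum_Ico_eq_sum_range]
    have hmi : m - (m - i) = i := by omega
    rw [hmi]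
    rw [← Finset.sum_range_reflect (fun k => r k) i]
    apply Finset.sum_congr rfl
    intro k hk
    simp only [mem_range] at hk
    have h1 : m - i + k < m := by omega
    have := hr (m - i + k) h1
    have h2 : m - 1 - (m - i + k) = i - 1 - k := by omega
    rw [this, h2]
  omega
lemma nat_construction (m n : ℕ) (r s : ℕ → ℕ)
    (hr : ∀ i < m, r i = r (m-1-i)) (hs : ∀ j < n, s j = s (n-1-j))
    (hsum : ∑ i ∈ range m, r i = ∑ j ∈ range n, s j) :
    ∃ A : ℕ → ℕ → ℕ,
      (∀ i < m, ∑ j ∈ range n, A i j = r i) ∧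
      (∀ j < n, ∑ i ∈ range m, A i j = s j) ∧
      (∀ i < m, ∀ j < n, A i j = A (m-1-i) (n-1-j)) := by
  set T := ∑ i ∈ range m, r i with hT
  set pr := fun k => ∑ i ∈ range k, r i with hpr
  set ps := fun k => ∑ j ∈ range k, s j with hps
  have hprm : Monotone pr := by
    apply monotone_nat_of_le_succ
    intro k; rw [hpr]; simp [Finset.sum_range_succ]
  have hpsm : Monotone ps := by
    apply monotone_nat_of_le_succ
    intro k; rw [hps]; simp [Finset.sum_range_succ]
  have hpr0 : pr 0 = 0 := by simp [hpr]
  have hps0 : ps 0 = 0 := by simp [hps]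
  have hprT : pr m = T := rfl
  have hpsT : ps n = T := hsum.symm
  have hprs : ∀ k, pr (k+1) = pr k + r k := fun k => Finset.sum_range_succ r k
  have hpss : ∀ k, ps (k+1) = ps k + s k := fun k => Finset.sum_range_succ s k
  refine ⟨fun i j => min (pr (i+1)) (ps (j+1)) - max (pr i) (ps j), ?_, ?_, ?_⟩
  · intro i hi
    have h1 : pr i + r i ≤ T := by
      rw [← hprs, ← hprT]; exact hprm hi
    have := row_aux ps hpsm n (pr i) (pr (i+1)) (by omega) (by rw [hprs]; omega) (by rw [hpsT, hprs]; omega)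
    calc ∑ j ∈ range n, (min (pr (i+1)) (ps (j+1)) - max (pr i) (ps j))
        = pr (i+1) - pr i := this
      _ = r i := by rw [hprs]; omega
  · intro j hj
    have h1 : ps j + s j ≤ T := by
      rw [← hpss, ← hpsT]; exact hpsm hj
    have heq : ∀ i, min (pr (i+1)) (ps (j+1)) - max (pr i) (ps j)
        = min (ps (j+1)) (pr (i+1)) - max (ps j) (pr i) := by
      intro i; omega
    simp_rw [heq]
    have := row_aux pr hprm m (ps j) (ps (j+1)) (by omega) (by rw [hpss]; omega) (by rw [hprT, hpss]; omega)
    calc ∑ i ∈ range m, (min (ps (j+1)) (pr (i+1)) - max (ps j) (pr i))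
        = ps (j+1) - ps j := this
      _ = s j := by rw [hpss]; omega
  · intro i hi j hj
    have e1 : pr (m-1-i) + pr (i+1) = T := by
      have := pal_prefix m r hr (i+1) hi
      have hm : m - (i+1) = m - 1 - i := by omega
      rw [hm] at this; exact this
    have e2 : pr (m-1-i+1) + pr i = T := by
      have := pal_prefix m r hr i (le_of_lt hi)
      have hm : m - i = m - 1 - i + 1 := by omega
      rw [hm] at this; exact this
    have e3 : ps (n-1-j) + ps (j+1) = T := by
      have h := pal_prefix n s hs (j+1) hj
      have hm : n - (j+1) = n - 1 - j := by omega
      rw [hm] at h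
      show (∑ k ∈ range (n-1-j), s k) + ∑ k ∈ range (j+1), s k = ∑ i ∈ range m, r i
      rw [← hT, hsum]; exact h
    have e4 : ps (n-1-j+1) + ps j = T := by
      have h := pal_prefix n s hs j (le_of_lt hj)
      have hm : n - j = n - 1 - j + 1 := by omega
      rw [hm] at h
      show (∑ k ∈ range (n-1-j+1), s k) + ∑ k ∈ range j, s k = ∑ i ∈ range m, r i
      rw [← hT, hsum]; exact h
    have b1 : pr i ≤ pr (i+1) := hprm (Nat.le_succ i)
    have b2 : pr (i+1) ≤ T := by rw [← hprT]; exact hprm hi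
    have b3 : ps j ≤ ps (j+1) := hpsm (Nat.le_succ j)
    have b4 : ps (j+1) ≤ T := by rw [← hpsT]; exact hpsm hj
    show min (pr (i+1)) (ps (j+1)) - max (pr i) (ps j)
        = min (pr (m-1-i+1)) (ps (n-1-j+1)) - max (pr (m-1-i)) (ps (n-1-j))
    omega

/-- **Dihedral transportation for the rotation ρ_π.**
`𝒯^π(R,S) ≠ ∅` iff `R` and `S` are palindromic, and the same for the
integral class `𝒯^π_ℤ(R,S)`. -/
theorem centrosymmetric_transportation (m n : ℕ) (R : Fin m → ℝ) (S : Fin n → ℝ)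
    (hR : ∀ i, 0 ≤ R i) (hS : ∀ j, 0 ≤ S j)
    (hsum : ∑ i, R i = ∑ j, S j) :
    ((∃ A : Matrix (Fin m) (Fin n) ℝ,
        (∀ i j, 0 ≤ A i j) ∧
        (∀ i, ∑ j, A i j = R i) ∧
        (∀ j, ∑ i, A i j = S j) ∧
        (∀ i j, A i j = A i.rev j.rev)) ↔
      ((∀ i, R i = R i.rev) ∧ (∀ j, S j = S j.rev)))
    ∧ ((∀ i, ∃ k : ℕ, R i = k) → (∀ j, ∃ k : ℕ, S j = k) →
      ((∃ A : Matrix (Fin m) (Fin n) ℕ,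
          (∀ i, ((∑ j, A i j : ℕ) : ℝ) = R i) ∧
          (∀ j, ((∑ i, A i j : ℕ) : ℝ) = S j) ∧
          (∀ i j, A i j = A i.rev j.rev)) ↔
        ((∀ i, R i = R i.rev) ∧ (∀ j, S j = S j.rev)))) := by
  have hreal : (∃ A : Matrix (Fin m) (Fin n) ℝ,
        (∀ i j, 0 ≤ A i j) ∧
        (∀ i, ∑ j, A i j = R i) ∧
        (∀ j, ∑ i, A i j = S j) ∧
        (∀ i j, A i j = A i.rev j.rev)) ↔
      ((∀ i, R i = R i.rev) ∧ (∀ j, S j = S j.rev)) := by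
    constructor
    · rintro ⟨A, hA0, hAr, hAc, hAs⟩
      constructor
      · intro i
        rw [← hAr i, ← hAr i.rev]
        calc ∑ j, A i j = ∑ j, A i.rev j.rev :=
              Finset.sum_congr rfl (fun j _ => hAs i j)
          _ = ∑ j, A i.rev j :=
              Fintype.sum_equiv Fin.revPerm _ _ (fun j => rfl)
      · intro j
        rw [← hAc j, ← hAc j.rev]
        calc ∑ i, A i j = ∑ i, A i.rev j.rev :=
              Finset.sum_congr rfl (fun i _ => hAs i j)
          _ = ∑ i, A i j.rev :=
              Fintype.sum_equiv Fin.revPerm _ _ (fun i => rfl)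
    · rintro ⟨hpR, hpS⟩
      by_cases hT : ∑ i, R i = 0
      · have hR0 : ∀ i, R i = 0 := fun i =>
          (Finset.sum_eq_zero_iff_of_nonneg (fun i _ => hR i)).mp hT i (Finset.mem_univ i)
        have hS0 : ∀ j, S j = 0 := fun j =>
          (Finset.sum_eq_zero_iff_of_nonneg (fun j _ => hS j)).mp (by rw [← hsum]; exact hT) j
            (Finset.mem_univ j)
        exact ⟨0, fun i j => le_refl 0, fun i => by simp [hR0 i, Matrix.zero_apply],
          fun j => by simp [hS0 j, Matrix.zero_apply], fun i j => rfl⟩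
      · set T := ∑ i, R i with hTdef
        have hTpos : 0 ≤ T := Finset.sum_nonneg (fun i _ => hR i)
        refine ⟨fun i j => R i * S j / T, ?_, ?_, ?_, ?_⟩
        · intro i j
          exact div_nonneg (mul_nonneg (hR i) (hS j)) hTpos
        · intro i
          rw [← Finset.sum_div, ← Finset.mul_sum, ← hsum,
            mul_div_assoc, div_self hT, mul_one]
        · intro j
          have : ∑ i, R i * S j / T = (∑ i, R i) * S j / T := by
            rw [← Finset.sum_div, ← Finset.sum_mul]
          rw [this, ← hTdef, mul_comm, mul_div_assoc, div_self hT, mul_one]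
        · intro i j
          show R i * S j / T = R i.rev * S j.rev / T
          rw [hpR i, hpS j]
  refine ⟨hreal, fun hRk hSk => ?_⟩
  constructor
  · rintro ⟨A, hAr, hAc, hAs⟩
    apply hreal.mp
    refine ⟨fun i j => (A i j : ℝ), fun i j => Nat.cast_nonneg _, ?_, ?_, ?_⟩
    · intro i; rw [← hAr i]; push_cast; rfl
    · intro j; rw [← hAc j]; push_cast; rfl
    · intro i j; exact_mod_cast congrArg Nat.cast (hAs i j)
  · rintro ⟨hpR, hpS⟩
    choose rr hrr using hRk
    choose ss hss using hSk
    set r' : ℕ → ℕ := fun k => if h : k < m then rr ⟨k, h⟩ else 0 with hr'def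
    set s' : ℕ → ℕ := fun k => if h : k < n then ss ⟨k, h⟩ else 0 with hs'def
    have hr'fin : ∀ i : Fin m, r' i.val = rr i := by
      intro i; simp only [hr'def, dif_pos i.isLt, Fin.eta]
    have hs'fin : ∀ j : Fin n, s' j.val = ss j := by
      intro j; simp only [hs'def, dif_pos j.isLt, Fin.eta]
    have hrpal : ∀ k < m, r' k = r' (m - 1 - k) := by
      intro k hk
      have hk2 : m - 1 - k < m := by omega
      simp only [hr'def, dif_pos hk, dif_pos hk2]
      have hrev : (⟨m - 1 - k, hk2⟩ : Fin m) = (⟨k, hk⟩ : Fin m).rev := by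
        apply Fin.ext; rw [Fin.val_rev]; simp; omega
      rw [hrev]
      have hcast : ((rr ⟨k, hk⟩ : ℕ) : ℝ) = ((rr (⟨k, hk⟩ : Fin m).rev : ℕ) : ℝ) := by
        rw [← hrr, ← hrr]; exact hpR _
      exact_mod_cast hcast
    have hspal : ∀ k < n, s' k = s' (n - 1 - k) := by
      intro k hk
      have hk2 : n - 1 - k < n := by omega
      simp only [hs'def, dif_pos hk, dif_pos hk2]
      have hrev : (⟨n - 1 - k, hk2⟩ : Fin n) = (⟨k, hk⟩ : Fin n).rev := by
        apply Fin.ext; rw [Fin.val_rev]; simp; omega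
      rw [hrev]
      have hcast : ((ss ⟨k, hk⟩ : ℕ) : ℝ) = ((ss (⟨k, hk⟩ : Fin n).rev : ℕ) : ℝ) := by
        rw [← hss, ← hss]; exact hpS _
      exact_mod_cast hcast
    have hsum' : ∑ i ∈ range m, r' i = ∑ j ∈ range n, s' j := by
      have h1 : ∑ i ∈ range m, r' i = ∑ i : Fin m, rr i := by
        rw [← Fin.sum_univ_eq_sum_range r' m]
        exact Finset.sum_congr rfl (fun i _ => hr'fin i)
      have h2 : ∑ j ∈ range n, s' j = ∑ j : Fin n, ss j := by
        rw [← Fin.sum_univ_eq_sum_range s' n]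
        exact Finset.sum_congr rfl (fun j _ => hs'fin j)
      rw [h1, h2]
      have : ((∑ i : Fin m, rr i : ℕ) : ℝ) = ((∑ j : Fin n, ss j : ℕ) : ℝ) := by
        push_cast
        calc ∑ i : Fin m, ((rr i : ℕ) : ℝ) = ∑ i, R i :=
              Finset.sum_congr rfl (fun i _ => (hrr i).symm)
          _ = ∑ j, S j := hsum
          _ = ∑ j : Fin n, ((ss j : ℕ) : ℝ) :=
              Finset.sum_congr rfl (fun j _ => hss j)
      exact_mod_cast this
    obtain ⟨A', hrow, hcol, hcen⟩ := nat_construction m n r' s' hrpal hspal hsum'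
    refine ⟨fun i j => A' i.val j.val, ?_, ?_, ?_⟩
    · intro i
      have : ∑ j : Fin n, A' i.val j.val = r' i.val := by
        rw [Fin.sum_univ_eq_sum_range (fun k => A' i.val k) n]
        exact hrow i.val i.isLt
      rw [this, hr'fin i, hrr i]
    · intro j
      have : ∑ i : Fin m, A' i.val j.val = s' j.val := by
        rw [Fin.sum_univ_eq_sum_range (fun k => A' k j.val) m]
        exact hcol j.val j.isLt
      rw [this, hs'fin j, hss j]
    · intro i j
      have h1 : (i.rev : ℕ) = m - 1 - i.val := by rw [Fin.val_rev]; omega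
      have h2 : (j.rev : ℕ) = n - 1 - j.val := by rw [Fin.val_rev]; omega
      show A' i.val j.val = A' (i.rev : ℕ) (j.rev : ℕ)
      rw [h1, h2]
      exact hcen i.val i.isLt j.val j.isLt
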